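/- Let μ be a boundedly finite Borel measure on E = [0,∞)² ∖ {(0,0)} that is homogeneous of degree −1, let ‖·‖ be a norm on ℝ² with ‖(1,0)‖ = 1 = ‖(0,1)‖, and let Φ be the spectral measure of μ with respect to ‖·‖. Then for every (x₁,x₂) ∈ [0,∞)² with x₁ + x₂ > 0, the stable tail dependence function admits the spectral representation μ({z ∈ E : x₁z₁ ≥ 1 or x₂z₂ ≥ 1}) = ∫_{[0,π/2]} max(x₁·sinθ, x₂·cosθ)/‖(sinθ,cosθ)‖ Φ(dθ). -/

import Mathlib

open MeasureTheory Set Real Filter Topology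
open scoped ENNReal Pointwise

noncomputable section

/-- The cone `E = [0,∞)² \ {(0,0)}` as a subset of `ℝ²`. -/
def Econe : Set (ℝ × ℝ) := (Ici 0 ×ˢ Ici 0) \ {((0 : ℝ), (0 : ℝ))}

/-- The angular coordinate `θ(z) = arctan (z₁ / z₂)`, with `θ(z) = π/2` when `z₂ = 0`. -/
def ang (z : ℝ × ℝ) : ℝ := if z.2 = 0 then π / 2 else Real.arctan (z.1 / z.2)


section Aux
variable (Nn : ℝ × ℝ → ℝ)
    (hN_add : ∀ z w, Nn (z + w) ≤ Nn z + Nn w)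
    (hN_smul : ∀ (c : ℝ) (z), Nn (c • z) = |c| * Nn z)
    (hN_zero : ∀ z, Nn z = 0 ↔ z = 0)
    (hN10 : Nn (1, 0) = 1) (hN01 : Nn (0, 1) = 1)

include hN_add hN_smul hN_zero in
lemma nn_nonneg : ∀ z, 0 ≤ Nn z := by
  intro z
  have h0 : Nn 0 = 0 := (hN_zero 0).mpr rfl
  have h1 : Nn (-z) = Nn z := by
    have := hN_smul (-1) z
    simpa using this
  have h2 : Nn 0 ≤ Nn z + Nn (-z) := by simpa using hN_add z (-z)
  linarith

include hN_add hN_smul hN10 hN01 in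
lemma nn_le : ∀ z : ℝ × ℝ, Nn z ≤ |z.1| + |z.2| := by
  intro z
  have hz : z = z.1 • ((1:ℝ), (0:ℝ)) + z.2 • ((0:ℝ), (1:ℝ)) := by
    ext <;> simp
  calc Nn z = Nn (z.1 • ((1:ℝ), (0:ℝ)) + z.2 • ((0:ℝ), (1:ℝ))) := by rw [← hz]
    _ ≤ Nn (z.1 • ((1:ℝ), (0:ℝ))) + Nn (z.2 • ((0:ℝ), (1:ℝ))) := hN_add _ _
    _ = |z.1| + |z.2| := by rw [hN_smul, hN_smul, hN10, hN01]; ring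

include hN_add hN_smul hN10 hN01 in
lemma nn_cont : Continuous Nn := by
  have key : ∀ z w : ℝ × ℝ, |Nn z - Nn w| ≤ |z.1 - w.1| + |z.2 - w.2| := by
    intro z w
    have h1 : Nn z ≤ Nn w + Nn (z - w) := by
      have := hN_add w (z - w); simpa using this
    have h2 : Nn w ≤ Nn z + Nn (z - w) := by
      have h3 : Nn (w - z) = Nn (z - w) := by
        have := hN_smul (-1) (z - w); simpa [neg_sub] using this
      have := hN_add z (w - z); rw [h3] at this; simpa using this
    have h4 : Nn (z - w) ≤ |z.1 - w.1| + |z.2 - w.2| :=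
      nn_le Nn hN_add hN_smul hN10 hN01 (z - w)
    rw [abs_sub_le_iff]; constructor <;> linarith
  have : LipschitzWith 2 Nn := by
    apply LipschitzWith.of_dist_le_mul
    intro z w
    rw [Real.dist_eq, Prod.dist_eq]
    calc |Nn z - Nn w| ≤ |z.1 - w.1| + |z.2 - w.2| := key z w
      _ ≤ dist z.1 w.1 + dist z.2 w.2 := by rw [Real.dist_eq, Real.dist_eq]
      _ ≤ 2 * max (dist z.1 w.1) (dist z.2 w.2) := by
          have := le_max_left (dist z.1 w.1) (dist z.2 w.2)
          have := le_max_right (dist z.1 w.1) (dist z.2 w.2)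
          linarith
  exact this.continuous

lemma measurable_ang : Measurable ang := by
  unfold ang
  apply Measurable.ite
  · exact measurableSet_eq_fun measurable_snd measurable_const
  · exact measurable_const
  · exact Real.measurable_arctan.comp (measurable_fst.div measurable_snd)

lemma ang_smul {c : ℝ} (hc : 0 < c) (z : ℝ × ℝ) : ang (c • z) = ang z := by
  unfold ang
  have hc' : c ≠ 0 := ne_of_gt hc
  simp only [Prod.smul_snd, Prod.smul_fst, smul_eq_mul, mul_eq_zero]
  by_cases h : z.2 = 0
  · simp [h]
  · rw [if_neg (by tauto), if_neg h, mul_div_mul_left _ _ hc']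

lemma econe_smul {c : ℝ} (hc : 0 < c) (z : ℝ × ℝ) : c • z ∈ Econe ↔ z ∈ Econe := by
  have hc' : c ≠ 0 := ne_of_gt hc
  unfold Econe
  simp only [mem_diff, mem_prod, mem_Ici, mem_singleton_iff, Prod.smul_fst, Prod.smul_snd,
    smul_eq_mul, Prod.ext_iff]
  constructor
  · rintro ⟨⟨h1, h2⟩, h3⟩
    refine ⟨⟨by nlinarith, by nlinarith⟩, ?_⟩
    rintro ⟨e1, e2⟩
    exact h3 ⟨by rw [e1, mul_zero], by rw [e2, mul_zero]⟩
  · rintro ⟨⟨h1, h2⟩, h3⟩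
    refine ⟨⟨mul_nonneg hc.le h1, mul_nonneg hc.le h2⟩, ?_⟩
    rintro ⟨e1, e2⟩
    exact h3 ⟨(mul_eq_zero.mp e1).resolve_left hc', (mul_eq_zero.mp e2).resolve_left hc'⟩

lemma ang_mem_Icc {z : ℝ × ℝ} (hz : z ∈ Econe) : ang z ∈ Icc 0 (π / 2) := by
  obtain ⟨⟨h1, h2⟩, h3⟩ := hz
  simp only [mem_Ici] at h1 h2
  unfold ang
  by_cases h : z.2 = 0
  · rw [if_pos h]
    constructor
    · positivity
    · exact le_refl _
  · rw [if_neg h]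
    constructor
    · have := Real.arctan_strictMono.monotone (div_nonneg h1 h2)
      simpa using this
    · exact le_of_lt (Real.arctan_lt_pi_div_two _)


lemma measurableSet_econe : MeasurableSet Econe :=
  (measurableSet_Ici.prod measurableSet_Ici).diff (measurableSet_singleton _)

variable (μ : Measure (ℝ × ℝ))
    (hhom : ∀ B : Set (ℝ × ℝ), B ⊆ Econe → MeasurableSet B → ∀ c > (0 : ℝ),
      μ (c • B) = ENNReal.ofReal c⁻¹ * μ B)
    (Φ : Measure ℝ)
    (hΦ : ∀ B : Set ℝ, MeasurableSet B →
      Φ B = μ {z | z ∈ Econe ∧ 1 ≤ Nn z ∧ ang z ∈ B})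

include hN_add hN_smul hN10 hN01 hhom hΦ in
lemma key_lemma (B : Set ℝ) (hB : MeasurableSet B) {s : ℝ} (hs : 0 < s) :
    μ {z | z ∈ Econe ∧ s ≤ Nn z ∧ ang z ∈ B} = ENNReal.ofReal s⁻¹ * Φ B := by
  have hNc : Continuous Nn := nn_cont Nn hN_add hN_smul hN10 hN01
  set B₁ : Set (ℝ × ℝ) := {z | z ∈ Econe ∧ 1 ≤ Nn z ∧ ang z ∈ B} with hB₁
  have hsub : B₁ ⊆ Econe := fun z hz => hz.1
  have hmeas : MeasurableSet B₁ := by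
    apply measurableSet_econe.inter
    exact (hNc.measurable measurableSet_Ici).inter (measurable_ang hB)
  have hset : s • B₁ = {z | z ∈ Econe ∧ s ≤ Nn z ∧ ang z ∈ B} := by
    ext z
    rw [Set.mem_smul_set_iff_inv_smul_mem₀ (ne_of_gt hs)]
    simp only [hB₁, mem_setOf_eq]
    rw [econe_smul (inv_pos.mpr hs), ang_smul (inv_pos.mpr hs), hN_smul,
      abs_of_pos (inv_pos.mpr hs), inv_mul_eq_div, one_le_div hs]
  rw [← hset, hhom B₁ hsub hmeas s hs, hΦ B hB]

include hN_add hN_smul hN_zero hN10 hN01 hhom hΦ in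
lemma inf_lemma (B : Set ℝ) (hB : MeasurableSet B) :
    μ {z | z ∈ Econe ∧ ang z ∈ B} = ⊤ * Φ B := by
  have hU : {z | z ∈ Econe ∧ ang z ∈ B} =
      ⋃ n : ℕ, {z | z ∈ Econe ∧ ((n : ℝ) + 1)⁻¹ ≤ Nn z ∧ ang z ∈ B} := by
    ext z
    simp only [mem_iUnion, mem_setOf_eq]
    constructor
    · rintro ⟨hz, hzB⟩
      have hzne : z ≠ 0 := by
        intro h0
        exact hz.2 (by rw [h0]; rfl)
      have hN : 0 < Nn z :=
        lt_of_le_of_ne (nn_nonneg Nn hN_add hN_smul hN_zero z)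
          (fun h => hzne ((hN_zero z).mp h.symm))
      obtain ⟨n, hn⟩ := exists_nat_gt (Nn z)⁻¹
      refine ⟨n, hz, ?_, hzB⟩
      rw [inv_le_comm₀ (by positivity) hN]
      calc (Nn z)⁻¹ ≤ (n : ℝ) := hn.le
        _ ≤ (n : ℝ) + 1 := by linarith
    · rintro ⟨n, hz, _, hzB⟩
      exact ⟨hz, hzB⟩
  have hmono : Monotone (fun n : ℕ => {z | z ∈ Econe ∧ ((n : ℝ) + 1)⁻¹ ≤ Nn z ∧ ang z ∈ B}) := by
    intro n m hnm z hz
    refine ⟨hz.1, le_trans ?_ hz.2.1, hz.2.2⟩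
    have : (n : ℝ) + 1 ≤ (m : ℝ) + 1 := by exact_mod_cast by omega
    exact inv_anti₀ (by positivity) this
  rw [hU, hmono.directed_le.measure_iUnion]
  have hval : ∀ n : ℕ, μ {z | z ∈ Econe ∧ ((n : ℝ) + 1)⁻¹ ≤ Nn z ∧ ang z ∈ B} =
      ENNReal.ofReal ((n : ℝ) + 1) * Φ B := by
    intro n
    rw [key_lemma Nn hN_add hN_smul hN10 hN01 μ hhom Φ hΦ B hB (by positivity), inv_inv]
  simp only [hval]
  rcases eq_or_ne (Φ B) 0 with h0 | h0
  · simp [h0]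
  · rw [← ENNReal.iSup_mul]
    congr 1
    rw [eq_top_iff, ← ENNReal.iSup_natCast]
    apply iSup_le
    intro n
    refine le_trans ?_ (le_iSup _ n)
    rw [← ENNReal.ofReal_natCast n]
    exact ENNReal.ofReal_le_ofReal (by linarith)


include hN_add hN_smul hN10 hN01 in
lemma meas_set_aux {f : ℝ → ℝ≥0∞} (hf : Measurable f) :
    MeasurableSet {z : ℝ × ℝ | z ∈ Econe ∧ 1 ≤ ENNReal.ofReal (Nn z) * f (ang z)} := by
  apply measurableSet_econe.inter
  have hF : Measurable fun z : ℝ × ℝ => ENNReal.ofReal (Nn z) * f (ang z) :=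
    ((nn_cont Nn hN_add hN_smul hN10 hN01).measurable.ennreal_ofReal).mul
      (hf.comp measurable_ang)
  exact hF measurableSet_Ici

include hN_add hN_smul hN_zero hN10 hN01 hhom hΦ in
lemma simple_lemma (φ : SimpleFunc ℝ ℝ≥0∞) :
    μ {z | z ∈ Econe ∧ 1 ≤ ENNReal.ofReal (Nn z) * φ (ang z)} = ∫⁻ θ, φ θ ∂Φ := by
  induction φ using SimpleFunc.induction with
  | @const c s hs =>
    set φ₀ := SimpleFunc.piecewise s hs (SimpleFunc.const ℝ c) (SimpleFunc.const ℝ 0) with hφ₀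
    have hφ : ∀ θ, φ₀ θ = Set.indicator s (fun _ => c) θ := by
      intro θ
      by_cases hmem : θ ∈ s <;>
        simp [hφ₀, SimpleFunc.piecewise_apply, Set.indicator_apply, hmem]
    have hint : ∫⁻ θ, φ₀ θ ∂Φ = c * Φ s := by
      simp_rw [hφ]
      rw [lintegral_indicator_const hs]
    rw [hint]
    rcases eq_or_ne c 0 with rfl | hc0
    · have hempty : {z : ℝ × ℝ | z ∈ Econe ∧ 1 ≤ ENNReal.ofReal (Nn z) * φ₀ (ang z)} = ∅ := by
        ext z
        simp only [mem_setOf_eq, mem_empty_iff_false, iff_false, not_and]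
        intro _
        rw [hφ]
        simp
      rw [hempty]
      simp
    rcases eq_or_ne c ⊤ with rfl | hctop
    · have hset : {z : ℝ × ℝ | z ∈ Econe ∧ 1 ≤ ENNReal.ofReal (Nn z) * φ₀ (ang z)} =
          {z | z ∈ Econe ∧ ang z ∈ s} := by
        ext z
        simp only [mem_setOf_eq]
        constructor
        · rintro ⟨hz, hle⟩
          refine ⟨hz, ?_⟩
          by_contra h
          rw [hφ, Set.indicator_of_notMem h, mul_zero] at hle
          exact (not_le.mpr zero_lt_one) hle
        · rintro ⟨hz, hmem⟩
          refine ⟨hz, ?_⟩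
          rw [hφ, Set.indicator_of_mem hmem]
          have hN : 0 < Nn z := by
            have hzne : z ≠ 0 := fun h0 => hz.2 (by rw [h0]; rfl)
            exact lt_of_le_of_ne (nn_nonneg Nn hN_add hN_smul hN_zero z)
              (fun h => hzne ((hN_zero z).mp h.symm))
          rw [ENNReal.mul_top (by simp only [ne_eq, ENNReal.ofReal_eq_zero, not_le]; linarith)]
          exact le_top
      rw [hset, inf_lemma Nn hN_add hN_smul hN_zero hN10 hN01 μ hhom Φ hΦ s hs]
    · -- 0 < c < ⊤
      have hc0' : 0 < c.toReal := ENNReal.toReal_pos hc0 hctop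
      have hiff : ∀ z : ℝ × ℝ, (1 ≤ ENNReal.ofReal (Nn z) * c ↔ c.toReal⁻¹ ≤ Nn z) := by
        intro z
        have hNz : 0 ≤ Nn z := nn_nonneg Nn hN_add hN_smul hN_zero z
        have hcinv : c⁻¹ = ENNReal.ofReal c.toReal⁻¹ := by
          rw [← ENNReal.toReal_inv, ENNReal.ofReal_toReal (by simp [hc0])]
        rw [mul_comm, ← ENNReal.inv_le_iff_le_mul
          (fun h => absurd h (by simp)) (fun h => absurd h hctop),
          hcinv, ENNReal.ofReal_le_ofReal_iff hNz]
      have hset : {z : ℝ × ℝ | z ∈ Econe ∧ 1 ≤ ENNReal.ofReal (Nn z) * φ₀ (ang z)} =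
          {z | z ∈ Econe ∧ c.toReal⁻¹ ≤ Nn z ∧ ang z ∈ s} := by
        ext z
        simp only [mem_setOf_eq]
        constructor
        · rintro ⟨hz, hle⟩
          by_cases hmem : ang z ∈ s
          · rw [hφ, Set.indicator_of_mem hmem] at hle
            exact ⟨hz, (hiff z).mp hle, hmem⟩
          · rw [hφ, Set.indicator_of_notMem hmem, mul_zero] at hle
            exact absurd hle (not_le.mpr zero_lt_one)
        · rintro ⟨hz, hle, hmem⟩
          rw [hφ, Set.indicator_of_mem hmem]
          exact ⟨hz, (hiff z).mpr hle⟩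
      rw [hset, key_lemma Nn hN_add hN_smul hN10 hN01 μ hhom Φ hΦ s hs (by positivity),
        inv_inv, ENNReal.ofReal_toReal hctop]
  | @add f g hdisj hf hg =>
    have hsupp : ∀ θ, (f : ℝ → ℝ≥0∞) θ = 0 ∨ (g : ℝ → ℝ≥0∞) θ = 0 := by
      intro θ
      by_contra h
      push_neg at h
      exact (Set.disjoint_left.mp hdisj h.1) h.2
    have hset : {z : ℝ × ℝ | z ∈ Econe ∧ 1 ≤ ENNReal.ofReal (Nn z) * (f + g) (ang z)} =
        {z | z ∈ Econe ∧ 1 ≤ ENNReal.ofReal (Nn z) * f (ang z)} ∪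
        {z | z ∈ Econe ∧ 1 ≤ ENNReal.ofReal (Nn z) * g (ang z)} := by
      ext z
      simp only [mem_setOf_eq, mem_union, SimpleFunc.coe_add, Pi.add_apply]
      rcases hsupp (ang z) with h0 | h0 <;> rw [h0] <;> simp [and_or_left]
    have hdisj2 : Disjoint {z : ℝ × ℝ | z ∈ Econe ∧ 1 ≤ ENNReal.ofReal (Nn z) * f (ang z)}
        {z : ℝ × ℝ | z ∈ Econe ∧ 1 ≤ ENNReal.ofReal (Nn z) * g (ang z)} := by
      rw [Set.disjoint_left]
      rintro z ⟨hz, hzf⟩ ⟨_, hzg⟩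
      rcases hsupp (ang z) with h0 | h0
      · rw [h0, mul_zero] at hzf
        exact (not_le.mpr zero_lt_one) hzf
      · rw [h0, mul_zero] at hzg
        exact (not_le.mpr zero_lt_one) hzg
    rw [hset, measure_union hdisj2
      (meas_set_aux Nn hN_add hN_smul hN10 hN01 g.measurable), hf, hg]
    have : ∫⁻ θ, (f + g) θ ∂Φ = ∫⁻ θ, (f θ + g θ) ∂Φ := by
      congr 1
    rw [this, lintegral_add_left f.measurable]


include hN_add hN_smul hN_zero hN10 hN01 hhom hΦ in
lemma main_lemma {f : ℝ → ℝ≥0∞} (hf : Measurable f) :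
    μ {z | z ∈ Econe ∧ 1 ≤ ENNReal.ofReal (Nn z) * f (ang z)} = ∫⁻ θ, f θ ∂Φ := by
  classical
  set T : Set (ℝ × ℝ) := {z | z ∈ Econe ∧ 1 ≤ ENNReal.ofReal (Nn z) * f (ang z)} with hT
  have hTmeas : MeasurableSet T := meas_set_aux Nn hN_add hN_smul hN10 hN01 hf
  have hTsub : T ⊆ Econe := fun z hz => hz.1
  have hscale : ∀ s : ℝ, 1 < s →
      ENNReal.ofReal s⁻¹ * μ T =
        μ {z | z ∈ Econe ∧ ENNReal.ofReal s ≤ ENNReal.ofReal (Nn z) * f (ang z)} := by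
    intro s hs
    have hs0 : 0 < s := lt_trans zero_lt_one hs
    have hb0 : ENNReal.ofReal s ≠ 0 := by simp only [ne_eq, ENNReal.ofReal_eq_zero, not_le]; linarith
    have hbt : ENNReal.ofReal s ≠ ⊤ := ENNReal.ofReal_ne_top
    have hiff : ∀ A : ℝ≥0∞, (1 ≤ (ENNReal.ofReal s)⁻¹ * A ↔ ENNReal.ofReal s ≤ A) := by
      intro A
      rw [mul_comm, ← div_eq_mul_inv,
        ENNReal.le_div_iff_mul_le (Or.inl hb0) (Or.inl hbt), one_mul]
    have hset : s • T = {z | z ∈ Econe ∧ ENNReal.ofReal s ≤ ENNReal.ofReal (Nn z) * f (ang z)} := by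
      ext z
      rw [Set.mem_smul_set_iff_inv_smul_mem₀ (ne_of_gt hs0)]
      simp only [hT, mem_setOf_eq]
      rw [econe_smul (inv_pos.mpr hs0), ang_smul (inv_pos.mpr hs0), hN_smul,
        abs_of_pos (inv_pos.mpr hs0),
        ENNReal.ofReal_mul (le_of_lt (inv_pos.mpr hs0)), mul_assoc,
        ENNReal.ofReal_inv_of_pos hs0, hiff]
    rw [← hset, hhom T hTsub hTmeas s hs0]
  set S : ℕ → Set (ℝ × ℝ) := fun n =>
    {z | z ∈ Econe ∧ 1 ≤ ENNReal.ofReal (Nn z) * (SimpleFunc.eapprox f n) (ang z)} with hS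
  have hSmono : Monotone S := by
    intro n m hnm z hz
    exact ⟨hz.1, le_trans hz.2 (mul_le_mul_right (SimpleFunc.monotone_eapprox f hnm _) _)⟩
  have hSval : ∀ n, μ (S n) = ∫⁻ θ, (SimpleFunc.eapprox f n) θ ∂Φ := fun n =>
    simple_lemma Nn hN_add hN_smul hN_zero hN10 hN01 μ hhom Φ hΦ (SimpleFunc.eapprox f n)
  have hUnion : μ (⋃ n, S n) = ∫⁻ θ, f θ ∂Φ := by
    rw [hSmono.directed_le.measure_iUnion]
    simp_rw [hSval]
    rw [← lintegral_iSup (fun n => (SimpleFunc.eapprox f n).measurable)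
      (fun n m hnm θ => SimpleFunc.monotone_eapprox f hnm θ)]
    congr 1
    funext θ
    exact SimpleFunc.iSup_eapprox_apply hf θ
  set L : Set (ℝ × ℝ) := {z | z ∈ Econe ∧ 1 < ENNReal.ofReal (Nn z) * f (ang z)} with hL
  have hsub1 : L ⊆ ⋃ n, S n := by
    rintro z ⟨hz, hlt⟩
    have heq : ENNReal.ofReal (Nn z) * f (ang z) =
        ⨆ n, ENNReal.ofReal (Nn z) * (SimpleFunc.eapprox f n) (ang z) := by
      rw [← ENNReal.mul_iSup, SimpleFunc.iSup_eapprox_apply hf]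
    rw [heq] at hlt
    obtain ⟨n, hn⟩ := lt_iSup_iff.mp hlt
    exact mem_iUnion.mpr ⟨n, hz, le_of_lt hn⟩
  have hsub2 : (⋃ n, S n) ⊆ T := by
    rintro z hz
    obtain ⟨n, hzn, hle⟩ := mem_iUnion.mp hz
    refine ⟨hzn, le_trans hle (mul_le_mul_right ?_ _)⟩
    rw [← SimpleFunc.iSup_eapprox_apply hf]
    exact le_iSup (fun n => (SimpleFunc.eapprox f n) (ang z)) n
  have h3 : μ T ≤ μ L := by
    have hbound : ∀ n : ℕ, ENNReal.ofReal (1 + ((n : ℝ) + 1)⁻¹)⁻¹ * μ T ≤ μ L := by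
      intro n
      have hs : (1 : ℝ) < 1 + ((n : ℝ) + 1)⁻¹ := by
        have : (0 : ℝ) < ((n : ℝ) + 1)⁻¹ := by positivity
        linarith
      rw [hscale _ hs]
      apply measure_mono
      rintro z ⟨hz, hle⟩
      refine ⟨hz, lt_of_lt_of_le ?_ hle⟩
      rw [show (1 : ℝ≥0∞) = ENNReal.ofReal 1 by simp]
      exact (ENNReal.ofReal_lt_ofReal_iff (by linarith)).mpr hs
    have htend : Tendsto (fun n : ℕ => ENNReal.ofReal (1 + ((n : ℝ) + 1)⁻¹)⁻¹ * μ T)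
        atTop (𝓝 (1 * μ T)) := by
      apply ENNReal.Tendsto.mul_const _ (Or.inl one_ne_zero)
      have h1 : Tendsto (fun n : ℕ => (1 + ((n : ℝ) + 1)⁻¹)) atTop (𝓝 1) := by
        have h0 : Tendsto (fun n : ℕ => ((n : ℝ) + 1)⁻¹) atTop (𝓝 0) :=
          tendsto_one_div_add_atTop_nhds_zero_nat.congr (by intro n; rw [one_div])
        simpa using tendsto_const_nhds.add h0
      have h2 : Tendsto (fun n : ℕ => (1 + ((n : ℝ) + 1)⁻¹)⁻¹) atTop (𝓝 1) := by
        simpa using h1.inv₀ one_ne_zero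
      have := ENNReal.tendsto_ofReal h2
      simpa using this
    have := le_of_tendsto htend (Filter.Eventually.of_forall hbound)
    rwa [one_mul] at this
  have h1 : μ L ≤ μ (⋃ n, S n) := measure_mono hsub1
  have h2 : μ (⋃ n, S n) ≤ μ T := measure_mono hsub2
  rw [← hUnion]
  exact le_antisymm (le_trans h3 h1) h2


include hN_add hN_smul hN_zero hN10 in
lemma geom_lemma {x₁ x₂ : ℝ} (hx₁ : 0 ≤ x₁) (hx₂ : 0 ≤ x₂) {z : ℝ × ℝ} (hz : z ∈ Econe) :
    max (x₁ * z.1) (x₂ * z.2) =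
      Nn z * (max (x₁ * Real.sin (ang z)) (x₂ * Real.cos (ang z)) /
        Nn (Real.sin (ang z), Real.cos (ang z))) := by
  have hzmem := hz
  simp only [Econe, mem_diff, mem_prod, mem_Ici, mem_singleton_iff] at hzmem
  obtain ⟨⟨h1, h2⟩, h3⟩ := hzmem
  by_cases h : z.2 = 0
  · have hz1 : 0 < z.1 := by
      rcases lt_or_eq_of_le h1 with h' | h'
      · exact h'
      · exact absurd (Prod.ext h'.symm h) h3
    have hang : ang z = π / 2 := if_pos h
    rw [hang, Real.sin_pi_div_two, Real.cos_pi_div_two, mul_one, mul_zero,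
      max_eq_left hx₁, hN10]
    have hzeq : z = z.1 • ((1 : ℝ), (0 : ℝ)) := by
      rw [Prod.smul_mk, smul_eq_mul, smul_eq_mul, mul_one, mul_zero]
      ext
      · rfl
      · exact h
    have hNz : Nn z = z.1 := by
      conv_lhs => rw [hzeq]
      rw [hN_smul, hN10, abs_of_pos hz1, mul_one]
    rw [hNz, h, mul_zero, max_eq_left (by positivity), div_one]
    ring
  · have hz2 : 0 < z.2 := lt_of_le_of_ne h2 (Ne.symm h)
    have hang : ang z = Real.arctan (z.1 / z.2) := if_neg h
    set t : ℝ := z.1 / z.2 with ht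
    set r : ℝ := Real.sqrt (1 + t ^ 2) with hrdef
    have hr : 0 < r := Real.sqrt_pos.mpr (by positivity)
    set c : ℝ := (z.2 * r)⁻¹ with hcdef
    have hc : 0 < c := by positivity
    have hsin : Real.sin (ang z) = c * z.1 := by
      rw [hang, Real.sin_arctan, ← hrdef, ht, div_div, hcdef, inv_mul_eq_div]
    have hcos : Real.cos (ang z) = c * z.2 := by
      rw [hang, Real.cos_arctan, ← hrdef, hcdef, inv_mul_eq_div]
      have hz2' : z.2 ≠ 0 := ne_of_gt hz2
      have hr' : r ≠ 0 := ne_of_gt hr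
      field_simp
    have hvec : (Real.sin (ang z), Real.cos (ang z)) = c • z := by
      ext
      · simpa using hsin
      · simpa using hcos
    have hNz : 0 < Nn z := by
      have hzne : z ≠ 0 := fun h0 => h3 (by rw [h0]; rfl)
      exact lt_of_le_of_ne (nn_nonneg Nn hN_add hN_smul hN_zero z)
        (fun hh => hzne ((hN_zero z).mp hh.symm))
    rw [hvec, hN_smul, abs_of_pos hc, hsin, hcos]
    have hmax : max (x₁ * (c * z.1)) (x₂ * (c * z.2)) = c * max (x₁ * z.1) (x₂ * z.2) := by
      rw [mul_max_of_nonneg _ _ hc.le]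
      ring_nf
    rw [hmax]
    field_simp

end Aux

theorem stmt11 (μ : Measure (ℝ × ℝ)) (hμE : μ Econeᶜ = 0)
    (hbf : ∀ ε > (0 : ℝ), μ {z | z ∈ Econe ∧ ε ≤ max z.1 z.2} < ⊤)
    (hhom : ∀ B : Set (ℝ × ℝ), B ⊆ Econe → MeasurableSet B → ∀ c > (0 : ℝ),
      μ (c • B) = ENNReal.ofReal c⁻¹ * μ B)
    (Nn : ℝ × ℝ → ℝ)
    (hN_add : ∀ z w, Nn (z + w) ≤ Nn z + Nn w)
    (hN_smul : ∀ (c : ℝ) (z), Nn (c • z) = |c| * Nn z)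
    (hN_zero : ∀ z, Nn z = 0 ↔ z = 0)
    (hN10 : Nn (1, 0) = 1) (hN01 : Nn (0, 1) = 1)
    (Φ : Measure ℝ)
    (hΦ : ∀ B : Set ℝ, MeasurableSet B →
      Φ B = μ {z | z ∈ Econe ∧ 1 ≤ Nn z ∧ ang z ∈ B}) :
    ∀ x₁ x₂ : ℝ, 0 ≤ x₁ → 0 ≤ x₂ → 0 < x₁ + x₂ →
      μ {z | z ∈ Econe ∧ (1 ≤ x₁ * z.1 ∨ 1 ≤ x₂ * z.2)} =
        ∫⁻ θ in Icc 0 (π / 2),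
          ENNReal.ofReal (max (x₁ * Real.sin θ) (x₂ * Real.cos θ) /
            Nn (Real.sin θ, Real.cos θ)) ∂Φ := by
  intro x₁ x₂ hx₁ hx₂ hsum
  have hNc : Continuous Nn := nn_cont Nn hN_add hN_smul hN10 hN01
  have hgcont : Continuous (fun θ : ℝ => max (x₁ * Real.sin θ) (x₂ * Real.cos θ) /
      Nn (Real.sin θ, Real.cos θ)) := by
    apply Continuous.div
    · exact (continuous_const.mul Real.continuous_sin).max
        (continuous_const.mul Real.continuous_cos)
    · exact hNc.comp (Real.continuous_sin.prodMk Real.continuous_cos)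
    · intro θ h0
      have h1 := (hN_zero _).mp h0
      rw [Prod.ext_iff] at h1
      obtain ⟨e1, e2⟩ := h1
      simp only [Prod.fst_zero, Prod.snd_zero] at e1 e2
      nlinarith [Real.sin_sq_add_cos_sq θ]
  have hf : Measurable (fun θ : ℝ => ENNReal.ofReal (max (x₁ * Real.sin θ) (x₂ * Real.cos θ) /
      Nn (Real.sin θ, Real.cos θ))) := hgcont.measurable.ennreal_ofReal
  have hsetEq : {z : ℝ × ℝ | z ∈ Econe ∧ (1 ≤ x₁ * z.1 ∨ 1 ≤ x₂ * z.2)} =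
      {z : ℝ × ℝ | z ∈ Econe ∧ 1 ≤ ENNReal.ofReal (Nn z) *
        ENNReal.ofReal (max (x₁ * Real.sin (ang z)) (x₂ * Real.cos (ang z)) /
          Nn (Real.sin (ang z), Real.cos (ang z)))} := by
    ext z
    simp only [mem_setOf_eq]
    apply and_congr_right
    intro hz
    have hNz : 0 ≤ Nn z := nn_nonneg Nn hN_add hN_smul hN_zero z
    rw [← le_max_iff, ← ENNReal.ofReal_mul hNz,
      ← geom_lemma Nn hN_add hN_smul hN_zero hN10 hx₁ hx₂ hz, ENNReal.one_le_ofReal]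
  rw [hsetEq, main_lemma Nn hN_add hN_smul hN_zero hN10 hN01 μ hhom Φ hΦ hf]
  have hnull : Φ ((Icc (0:ℝ) (π / 2))ᶜ) = 0 := by
    rw [hΦ _ measurableSet_Icc.compl]
    have hempty : {z : ℝ × ℝ | z ∈ Econe ∧ 1 ≤ Nn z ∧ ang z ∈ (Icc (0:ℝ) (π / 2))ᶜ} = ∅ := by
      ext z
      simp only [mem_setOf_eq, mem_empty_iff_false, iff_false, not_and]
      intro hz _ hcon
      exact hcon (ang_mem_Icc hz)
    rw [hempty, measure_empty]
  rw [← lintegral_add_compl (fun θ : ℝ => ENNReal.ofReal (max (x₁ * Real.sin θ)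
      (x₂ * Real.cos θ) / Nn (Real.sin θ, Real.cos θ))) measurableSet_Icc (μ := Φ)]
  rw [setLIntegral_measure_zero _ _ hnull, add_zero]
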